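/- Let ρ be a positive integer, r an integer, and set s = ρ+r. In ℚ[[v]] let u be the unique power series with constant term 1 satisfying u^{ρ²} = (1+v)^{r²−ρ²}, and set w(v) = v·u. In ℚ[[t]] let u′ be the unique power series with constant term 1 satisfying (u′)^{ρ} = (1+(1−s/ρ)t)^{ρ−s}, and set z(t) = t·u′ and v(t) = t·(1−(r/ρ)t)^{−1}. Let G ∈ ℚ[[w]] be the unique power series with G(w(v)) = 1+v in ℚ[[v]], and let P ∈ ℚ[[z]] be the unique power series with P(z(t)) = (1+(1−s/ρ)t)^{−1}·(1+(2−s/ρ)t) in ℚ[[t]]. Then G(w(v(t))) = P(z(t)) as elements of ℚ[[t]]. -/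

import Mathlib

open PowerSeries

/-- Composition (substitution) `f(g)` of formal power series, correct whenever the
constant term of `g` vanishes. -/
noncomputable def comp (f g : ℚ⟦X⟧) : ℚ⟦X⟧ :=
  PowerSeries.mk fun n => ∑ k ∈ Finset.range (n + 1), coeff k f * coeff n (g ^ k)

/-- Integer power of a formal power series (using the formal inverse for negative
exponents). -/
noncomputable def zp (f : ℚ⟦X⟧) (n : ℤ) : ℚ⟦X⟧ :=
  f ^ n.toNat * f⁻¹ ^ (-n).toNat

namespace CompAux
open Finset

lemma coeff_comp (f g : ℚ⟦X⟧) (n : ℕ) :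
    coeff n (comp f g) = ∑ k ∈ range (n + 1), coeff k f * coeff n (g ^ k) :=
  coeff_mk _ _

lemma coeff_pow_zero {g : ℚ⟦X⟧} (hg : constantCoeff g = 0) {k n : ℕ} (h : n < k) :
    coeff n (g ^ k) = 0 := by
  have hd : (X : ℚ⟦X⟧) ^ k ∣ g ^ k := pow_dvd_pow_of_dvd (X_dvd_iff.mpr hg) k
  exact (X_pow_dvd_iff.mp hd) n h

lemma constantCoeff_comp (f g : ℚ⟦X⟧) :
    constantCoeff (comp f g) = constantCoeff f := by
  rw [← coeff_zero_eq_constantCoeff_apply, coeff_comp]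
  simp

lemma coeff_aeval_trunc {g : ℚ⟦X⟧} (hg : constantCoeff g = 0) (f : ℚ⟦X⟧) {n i : ℕ}
    (hi : i ≤ n) :
    coeff i (Polynomial.aeval g (trunc (n + 1) f)) = coeff i (comp f g) := by
  rw [Polynomial.aeval_eq_sum_range' (natDegree_trunc_lt f n), map_sum, coeff_comp]
  rw [Finset.sum_subset (Finset.range_subset_range.mpr (Nat.succ_le_succ hi))]
  · apply Finset.sum_congr rfl
    intro k hk
    rw [coeff_trunc, if_pos (mem_range.mp hk), map_smul, smul_eq_mul]
  · intro k hk hk2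
    simp only [mem_range, not_lt] at hk2
    rw [coeff_pow_zero hg (by omega), mul_zero]

lemma comp_mul {g : ℚ⟦X⟧} (hg : constantCoeff g = 0) (f f' : ℚ⟦X⟧) :
    comp (f * f') g = comp f g * comp f' g := by
  ext n
  have key : trunc (n + 1) ((trunc (n + 1) f : ℚ⟦X⟧) * (trunc (n + 1) f' : ℚ⟦X⟧))
      = trunc (n + 1) (f * f') := trunc_trunc_mul_trunc f f'
  -- the two polynomials agree below degree n+1
  have hdvd : (Polynomial.X : Polynomial ℚ) ^ (n + 1) ∣
      trunc (n + 1) f * trunc (n + 1) f' - trunc (n + 1) (f * f') := by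
    rw [Polynomial.X_pow_dvd_iff]
    intro d hd
    have e1 := PowerSeries.coeff_mul_eq_coeff_trunc_mul_trunc f f' hd
    rw [Polynomial.coeff_sub, coeff_trunc, if_pos hd, ← Polynomial.coeff_coe,
      Polynomial.coe_mul, ← e1, sub_self]
  obtain ⟨E, hE⟩ := hdvd
  have heq : Polynomial.aeval g (trunc (n + 1) f) * Polynomial.aeval g (trunc (n + 1) f') =
      Polynomial.aeval g (trunc (n + 1) (f * f')) + g ^ (n + 1) * Polynomial.aeval g E := by
    have := congrArg (Polynomial.aeval g) hE
    simp only [map_sub, map_mul, map_pow, Polynomial.aeval_X] at this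
    linear_combination this
  have c0 : coeff n (g ^ (n + 1) * Polynomial.aeval g E) = 0 := by
    have hd : (X : ℚ⟦X⟧) ^ (n + 1) ∣ g ^ (n + 1) * Polynomial.aeval g E :=
      Dvd.dvd.mul_right (pow_dvd_pow_of_dvd (X_dvd_iff.mpr hg) _) _
    exact (X_pow_dvd_iff.mp hd) n (Nat.lt_succ_self n)
  calc coeff n (comp (f * f') g)
      = coeff n (Polynomial.aeval g (trunc (n + 1) (f * f'))) :=
        (coeff_aeval_trunc hg _ le_rfl).symm
    _ = coeff n (Polynomial.aeval g (trunc (n + 1) f) * Polynomial.aeval g (trunc (n + 1) f')) := by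
        rw [heq, map_add, c0, add_zero]
    _ = coeff n (comp f g * comp f' g) := by
        rw [PowerSeries.coeff_mul, PowerSeries.coeff_mul]
        apply Finset.sum_congr rfl
        intro p hp
        rw [HasAntidiagonal.mem_antidiagonal] at hp
        rw [coeff_aeval_trunc hg f (by omega), coeff_aeval_trunc hg f' (by omega)]

lemma comp_one (g : ℚ⟦X⟧) : comp 1 g = 1 := by
  ext n
  rw [coeff_comp]
  rw [Finset.sum_eq_single 0]
  · simp
  · intro k hk hk0
    rw [coeff_one, if_neg hk0, zero_mul]
  · simp

lemma comp_pow {g : ℚ⟦X⟧} (hg : constantCoeff g = 0) (f : ℚ⟦X⟧) (k : ℕ) :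
    comp (f ^ k) g = comp f g ^ k := by
  induction k with
  | zero => simpa using comp_one g
  | succ k ih => rw [pow_succ, pow_succ, comp_mul hg, ih]

lemma comp_add (f f' g : ℚ⟦X⟧) : comp (f + f') g = comp f g + comp f' g := by
  ext n
  simp [coeff_comp, add_mul, Finset.sum_add_distrib]

lemma comp_C_mul (a : ℚ) (f g : ℚ⟦X⟧) : comp (C a * f) g = C a * comp f g := by
  ext n
  simp [coeff_comp, coeff_C_mul, Finset.mul_sum, mul_assoc]

lemma comp_zero (g : ℚ⟦X⟧) : comp 0 g = 0 := by
  ext n; simp [coeff_comp]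

lemma comp_sum {ι : Type*} (s : Finset ι) (f : ι → ℚ⟦X⟧) (g : ℚ⟦X⟧) :
    comp (∑ i ∈ s, f i) g = ∑ i ∈ s, comp (f i) g := by
  classical
  induction s using Finset.induction with
  | empty => simp [comp_zero]
  | insert _ _ h ih => rw [Finset.sum_insert h, Finset.sum_insert h, comp_add, ih]

lemma comp_X {g : ℚ⟦X⟧} (hg : constantCoeff g = 0) : comp X g = g := by
  ext n
  rw [coeff_comp]
  rw [Finset.sum_eq_single 1]
  · simp
  · intro k hk hk1
    rcases Nat.eq_zero_or_pos k with h0 | h1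
    · subst h0; simp
    · rw [coeff_X, if_neg hk1, zero_mul]
  · intro h
    simp only [mem_range, not_lt] at h
    have hn0 : n = 0 := by omega
    subst hn0
    simp only [coeff_zero_eq_constantCoeff_apply] at *
    simp [hg]

lemma comp_assoc {g h : ℚ⟦X⟧} (hg : constantCoeff g = 0) (hh : constantCoeff h = 0)
    (f : ℚ⟦X⟧) : comp (comp f g) h = comp f (comp g h) := by
  ext n
  set F : ℚ⟦X⟧ := ∑ k ∈ range (n + 1), C (coeff k f) * g ^ k with hF
  have hFc : ∀ i ≤ n, coeff i (comp f g) = coeff i F := by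
    intro i hi
    rw [hF, map_sum, coeff_comp]
    rw [Finset.sum_subset (Finset.range_subset_range.mpr (Nat.succ_le_succ hi))]
    · exact Finset.sum_congr rfl fun k _ => by rw [coeff_C_mul]
    · intro k hk hk2
      simp only [mem_range, not_lt] at hk2
      rw [coeff_pow_zero hg (by omega), mul_zero]
  have h1 : coeff n (comp (comp f g) h) = coeff n (comp F h) := by
    rw [coeff_comp, coeff_comp]
    exact Finset.sum_congr rfl fun k hk => by
      rw [hFc k (by simpa [Nat.lt_succ_iff] using hk)]
  rw [h1, hF, comp_sum]
  have h2 : ∀ k : ℕ, comp (C (coeff k f) * g ^ k) h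
      = C (coeff k f) * comp g h ^ k := fun k => by
    rw [comp_C_mul, comp_pow hh]
  simp only [h2]
  rw [map_sum, coeff_comp]
  exact Finset.sum_congr rfl fun k _ => by rw [coeff_C_mul]

end CompAux

/-- Rank-ρ virtual Segre–Verlinde correspondence `G(w(v(t))) = P(z(t))`, where
`G = g_{r/ρ}` and `P = V_s·W_s²`, under the formal variable changes
`w = v(1+v)^{r²/ρ²-1}`, `z = t(1+(1-s/ρ)t)^{1-s/ρ}`, `v = t(1-(r/ρ)t)⁻¹`, `s = ρ+r`. -/
theorem virtual_segre_verlinde_g (ρ : ℕ) (hρ : 0 < ρ) (r s : ℤ) (hs : s = ρ + r)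
    (u u' vt : ℚ⟦X⟧)
    (hu0 : constantCoeff u = 1)
    (hu : u ^ (ρ ^ 2) = zp (1 + X) (r ^ 2 - (ρ : ℤ) ^ 2))
    (hu'0 : constantCoeff u' = 1)
    (hu' : u' ^ ρ = zp (1 + C (1 - (s : ℚ) / (ρ : ℚ)) * X) ((ρ : ℤ) - s))
    (hvt : vt = X * (1 - C ((r : ℚ) / (ρ : ℚ)) * X)⁻¹)
    (G P : ℚ⟦X⟧)
    (hG : comp G (X * u) = 1 + X)
    (hP : comp P (X * u') =
      (1 + C (1 - (s : ℚ) / (ρ : ℚ)) * X)⁻¹ * (1 + C (2 - (s : ℚ) / (ρ : ℚ)) * X)) :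
    comp G (comp (X * u) vt) = comp P (X * u') := by
  have hρQ : (ρ : ℚ) ≠ 0 := Nat.cast_ne_zero.mpr hρ.ne'
  have hsQ : (s : ℚ) = (ρ : ℚ) + (r : ℚ) := by exact_mod_cast congrArg (Int.cast : ℤ → ℚ) hs
  set a : ℚ := (r : ℚ) / (ρ : ℚ) with ha
  have e1 : (1 - (s : ℚ) / (ρ : ℚ)) = -a := by
    rw [hsQ, ha]; field_simp; ring
  have e2 : (2 - (s : ℚ) / (ρ : ℚ)) = 1 - a := by
    rw [hsQ, ha]; field_simp; ring
  set A : ℚ⟦X⟧ := 1 - C a * X with hA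
  have hA0 : constantCoeff A = 1 := by simp [hA]
  have hAne : A ≠ 0 := by
    intro h; rw [h, map_zero] at hA0; exact one_ne_zero hA0.symm
  have hAinv : A * A⁻¹ = 1 :=
    PowerSeries.mul_inv_cancel A (by rw [hA0]; exact one_ne_zero)
  have hw0 : constantCoeff (X * u) = 0 := by simp
  have hv0 : constantCoeff vt = 0 := by rw [hvt]; simp
  rw [← CompAux.comp_assoc hw0 hv0 G, hG, CompAux.comp_add, CompAux.comp_one,
    CompAux.comp_X hv0, hP, e1, e2]
  have hAeq : (1 : ℚ⟦X⟧) + C (-a) * X = A := by rw [map_neg, hA]; ring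
  rw [hAeq, hvt]
  apply mul_left_cancel₀ hAne
  calc A * (1 + X * A⁻¹) = A + (A * A⁻¹) * X := by ring
    _ = 1 + C (1 - a) * X := by rw [hAinv, one_mul, hA, map_sub, map_one]; ring
    _ = A * (A⁻¹ * (1 + C (1 - a) * X)) := by rw [← mul_assoc, hAinv, one_mul]
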